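/- Let α < 1 be a real number, and let x, y, x′, y′ be real numbers with 0 < x < y, 0 ≤ x′ < x, and y′ ≤ x′. Then |y^α − x^α| ≤ |(y − y′)^α − (x − x′)^α|. -/

import Mathlib

open Real Set

private lemma aux_hasDeriv (α t u : ℝ) (hu : 0 < u) (ht : 0 ≤ t) :
    HasDerivAt (fun v : ℝ => (v + t) ^ α - v ^ α)
      (α * (u + t) ^ (α - 1) - α * u ^ (α - 1)) u := by
  have h1 : HasDerivAt (fun v : ℝ => (v + t) ^ α) (α * (u + t) ^ (α - 1)) u := by
    have := (Real.hasDerivAt_rpow_const (x := u + t) (p := α)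
      (Or.inl (by positivity))).comp u ((hasDerivAt_id u).add_const t)
    simpa [Function.comp_def] using this
  have h2 : HasDerivAt (fun v : ℝ => v ^ α) (α * u ^ (α - 1)) u :=
    Real.hasDerivAt_rpow_const (Or.inl hu.ne')
  exact h1.sub h2

private lemma aux_deriv_pieces (α t : ℝ) (hα : α < 1) (ht : 0 ≤ t) (u : ℝ) (hu : 0 < u) :
    (u + t) ^ (α - 1) - u ^ (α - 1) ≤ 0 := by
  have := Real.rpow_le_rpow_of_nonpos hu (by linarith : u ≤ u + t) (by linarith : α - 1 ≤ 0)
  linarith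

/-- The key antitonicity: for `α < 1`, `u ↦ |(u+t)^α - u^α|` is antitone on `(0,∞)`. -/
private lemma aux_anti (α t : ℝ) (hα : α < 1) (ht : 0 ≤ t) {a b : ℝ}
    (ha : 0 < a) (hab : a ≤ b) :
    |(b + t) ^ α - b ^ α| ≤ |(a + t) ^ α - a ^ α| := by
  have hconv : Convex ℝ (Ioi (0:ℝ)) := convex_Ioi 0
  have hint : interior (Ioi (0:ℝ)) = Ioi 0 := interior_Ioi
  rcases le_or_gt 0 α with hα0 | hα0
  · -- g = (u+t)^α - u^α is nonneg and antitone
    have hanti : AntitoneOn (fun v : ℝ => (v + t) ^ α - v ^ α) (Ioi 0) := by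
      apply antitoneOn_of_deriv_nonpos hconv
      · exact fun u hu => (aux_hasDeriv α t u hu ht).continuousAt.continuousWithinAt
      · rw [hint]; exact fun u hu => (aux_hasDeriv α t u hu ht).differentiableAt.differentiableWithinAt
      · rw [hint]; intro u hu
        rw [(aux_hasDeriv α t u hu ht).deriv]
        have := aux_deriv_pieces α t hα ht u hu
        nlinarith
    have h1 : (0:ℝ) ≤ (b + t) ^ α - b ^ α := by
      have := Real.rpow_le_rpow (by linarith : (0:ℝ) ≤ b) (by linarith : b ≤ b + t) hα0
      linarith
    have h2 : (0:ℝ) ≤ (a + t) ^ α - a ^ α := by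
      have := Real.rpow_le_rpow (by linarith : (0:ℝ) ≤ a) (by linarith : a ≤ a + t) hα0
      linarith
    rw [abs_of_nonneg h1, abs_of_nonneg h2]
    exact hanti (mem_Ioi.2 ha) (mem_Ioi.2 (lt_of_lt_of_le ha hab)) hab
  · -- g = u^α - (u+t)^α is nonneg and antitone
    have hanti : AntitoneOn (fun v : ℝ => v ^ α - (v + t) ^ α) (Ioi 0) := by
      apply antitoneOn_of_deriv_nonpos hconv
      · intro u hu
        exact ((aux_hasDeriv α t u hu ht).neg.congr_deriv rfl).continuousAt.continuousWithinAt
          |>.congr (fun v hv => by simp only [Pi.neg_apply]; ring) (by simp only [Pi.neg_apply]; ring)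
      · rw [hint]; intro u hu
        have : HasDerivAt (fun v : ℝ => v ^ α - (v + t) ^ α)
            (-(α * (u + t) ^ (α - 1) - α * u ^ (α - 1))) u := by
          have := (aux_hasDeriv α t u hu ht).neg
          exact this.congr_of_eventuallyEq (Filter.Eventually.of_forall fun v => by simp only [Pi.neg_apply]; ring)
        exact this.differentiableAt.differentiableWithinAt
      · rw [hint]; intro u hu
        have hd : HasDerivAt (fun v : ℝ => v ^ α - (v + t) ^ α)
            (-(α * (u + t) ^ (α - 1) - α * u ^ (α - 1))) u := by
          have := (aux_hasDeriv α t u hu ht).neg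
          exact this.congr_of_eventuallyEq (Filter.Eventually.of_forall fun v => by simp only [Pi.neg_apply]; ring)
        rw [hd.deriv]
        have := aux_deriv_pieces α t hα ht u hu
        nlinarith
    have h1 : (b + t) ^ α - b ^ α ≤ 0 := by
      have := Real.rpow_le_rpow_of_nonpos (lt_of_lt_of_le ha hab)
        (by linarith : b ≤ b + t) hα0.le
      linarith
    have h2 : (a + t) ^ α - a ^ α ≤ 0 := by
      have := Real.rpow_le_rpow_of_nonpos ha (by linarith : a ≤ a + t) hα0.le
      linarith
    rw [abs_of_nonpos h1, abs_of_nonpos h2]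
    have := hanti (mem_Ioi.2 ha) (mem_Ioi.2 (lt_of_lt_of_le ha hab)) hab
    simpa using this

/-- Lemma A.1 of the paper. -/
theorem stmt_5 (α x y x' y' : ℝ) (hα : α < 1) (hx : 0 < x) (hxy : x < y)
    (hx'0 : 0 ≤ x') (hx'x : x' < x) (hy' : y' ≤ x') :
    |y ^ α - x ^ α| ≤ |(y - y') ^ α - (x - x') ^ α| := by
  set δ := x' - y' with hδdef
  have hδ : 0 ≤ δ := by simp [hδdef]; linarith
  -- Step 1: |y^α - x^α| ≤ |(y+δ)^α - x^α|
  have step1 : |y ^ α - x ^ α| ≤ |(y + δ) ^ α - x ^ α| := by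
    rcases le_or_gt 0 α with hα0 | hα0
    · have h1 : x ^ α ≤ y ^ α := Real.rpow_le_rpow hx.le hxy.le hα0
      have h2 : y ^ α ≤ (y + δ) ^ α :=
        Real.rpow_le_rpow (by linarith) (by linarith) hα0
      rw [abs_of_nonneg (by linarith), abs_of_nonneg (by linarith)]
      linarith
    · have h1 : y ^ α ≤ x ^ α := Real.rpow_le_rpow_of_nonpos hx hxy.le hα0.le
      have h2 : (y + δ) ^ α ≤ y ^ α :=
        Real.rpow_le_rpow_of_nonpos (by linarith) (by linarith) hα0.le
      rw [abs_of_nonpos (by linarith), abs_of_nonpos (by linarith)]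
      linarith
  -- Step 2: use antitonicity with a = x - x', b = x, t = y - x + δ
  have step2 : |(x + (y - x + δ)) ^ α - x ^ α| ≤
      |((x - x') + (y - x + δ)) ^ α - (x - x') ^ α| :=
    aux_anti α (y - x + δ) hα (by linarith) (by linarith) (by linarith)
  have e1 : x + (y - x + δ) = y + δ := by ring
  have e2 : (x - x') + (y - x + δ) = y - y' := by rw [hδdef]; ring
  rw [e1, e2] at step2
  exact step1.trans step2
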